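/- For nonnegative integers b and n with n/6 ≤ b < n/4, the graph S_{b,n} has book number exactly b. -/

import Mathlib

open Finset SimpleGraph

/-- Adjacency of the 3-prism graph: two triangles `{(s,0),(s,1),(s,2)}` for `s : Fin 2`,
with a perfect matching between vertices with the same second coordinate. -/
def prismAdj (p q : Fin 2 × Fin 3) : Prop :=
  (p.1 = q.1 ∧ p.2 ≠ q.2) ∨ (p.1 ≠ q.1 ∧ p.2 = q.2)

/-- The sizes of the six parts of `S_{b,n}`: four parts of size `b` and two parts of
size `⌊(n-4b)/2⌋` and `⌈(n-4b)/2⌉`. -/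
def prismPartSize (b n : ℕ) (p : Fin 2 × Fin 3) : ℕ :=
  if p.2 = 2 then (if p.1 = 0 then (n - 4 * b) / 2 else (n - 4 * b) - (n - 4 * b) / 2) else b

/-- The graph `S_{b,n}`, the blow-up of the 3-prism graph. -/
def SGraph (b n : ℕ) : SimpleGraph (Σ p : Fin 2 × Fin 3, Fin (prismPartSize b n p)) where
  Adj x y := prismAdj x.1 y.1
  symm := by
    constructor; rintro x y (⟨h1, h2⟩ | ⟨h1, h2⟩)
    · exact Or.inl ⟨h1.symm, fun h => h2 h.symm⟩
    · exact Or.inr ⟨fun h => h1 h.symm, h2.symm⟩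
  loopless := by
    constructor; rintro x (⟨_, h⟩ | ⟨h, _⟩) <;> exact h rfl

instance (b n : ℕ) : DecidableRel (SGraph b n).Adj := fun x y =>
  decidable_of_iff ((x.1.1 = y.1.1 ∧ x.1.2 ≠ y.1.2) ∨ (x.1.1 ≠ y.1.1 ∧ x.1.2 = y.1.2)) Iff.rfl

instance : DecidableRel prismAdj := fun p q =>
  decidable_of_iff ((p.1 = q.1 ∧ p.2 ≠ q.2) ∨ (p.1 ≠ q.1 ∧ p.2 = q.2)) Iff.rfl

lemma inter_card (b n : ℕ) (u v : Σ p : Fin 2 × Fin 3, Fin (prismPartSize b n p)) :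
    ((SGraph b n).neighborFinset u ∩ (SGraph b n).neighborFinset v).card
    = ∑ p ∈ univ.filter (fun p : Fin 2 × Fin 3 => prismAdj u.1 p ∧ prismAdj v.1 p),
        prismPartSize b n p := by
  have h : (SGraph b n).neighborFinset u ∩ (SGraph b n).neighborFinset v
      = (univ.filter fun p : Fin 2 × Fin 3 => prismAdj u.1 p ∧ prismAdj v.1 p).sigma
          (fun p => (univ : Finset (Fin (prismPartSize b n p)))) := by
    ext ⟨p, i⟩
    simp only [Finset.mem_inter, SimpleGraph.mem_neighborFinset]
    simp [SimpleGraph.mem_neighborFinset, SGraph, Finset.mem_sigma]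
  rw [h, Finset.card_sigma]
  simp

/-- For nonnegative integers `b` and `n` with `n/6 ≤ b < n/4`, the graph `S_{b,n}` has
book number exactly `b`: every edge lies in at most `b` triangles, and some edge lies in
exactly `b` triangles. -/
theorem SGraph_bookNumber (b n : ℕ) (h1 : (n : ℝ) / 6 ≤ b) (h2 : (b : ℝ) < n / 4) :
    (∀ u v, (SGraph b n).Adj u v →
      ((SGraph b n).neighborFinset u ∩ (SGraph b n).neighborFinset v).card ≤ b) ∧
    (∃ u v, (SGraph b n).Adj u v ∧
      ((SGraph b n).neighborFinset u ∩ (SGraph b n).neighborFinset v).card = b) := by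
  have hn6 : n ≤ 6 * b := by
    have h' : (n : ℝ) ≤ 6 * b := by linarith
    exact_mod_cast h'
  have hn4 : 4 * b < n := by
    have h' : (4 : ℝ) * b < n := by linarith
    exact_mod_cast h'
  have hb1 : 1 ≤ b := by omega
  have hsize : ∀ r, prismPartSize b n r ≤ b := by
    intro r
    simp only [prismPartSize]
    split_ifs <;> omega
  have hfilter : ∀ p q : Fin 2 × Fin 3, prismAdj p q →
      (univ.filter fun r => prismAdj p r ∧ prismAdj q r).card ≤ 1 := by decide
  constructor
  · intro u v hadj
    rw [inter_card]
    calc ∑ p ∈ univ.filter (fun p : Fin 2 × Fin 3 => prismAdj u.1 p ∧ prismAdj v.1 p),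
            prismPartSize b n p
        ≤ ∑ _p ∈ univ.filter (fun p : Fin 2 × Fin 3 => prismAdj u.1 p ∧ prismAdj v.1 p), b :=
          Finset.sum_le_sum fun r _ => hsize r
      _ = (univ.filter (fun p : Fin 2 × Fin 3 => prismAdj u.1 p ∧ prismAdj v.1 p)).card * b := by
          rw [Finset.sum_const, smul_eq_mul]
      _ ≤ 1 * b := Nat.mul_le_mul_right b (hfilter u.1 v.1 hadj)
      _ = b := one_mul b
  · refine ⟨⟨(1, 0), ⟨0, by simp [prismPartSize]; omega⟩⟩,
      ⟨(1, 2), ⟨0, by simp [prismPartSize]; omega⟩⟩, ?_, ?_⟩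
    · show prismAdj (1, 0) (1, 2); decide
    rw [inter_card]
    have hf : (univ.filter fun r => prismAdj ((1 : Fin 2), (0 : Fin 3)) r ∧
        prismAdj ((1 : Fin 2), (2 : Fin 3)) r) = {((1 : Fin 2), (1 : Fin 3))} := by decide
    rw [hf, Finset.sum_singleton]
    simp [prismPartSize]
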